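/- Let P be a group such that every nontrivial subgroup of P admits a nontrivial group homomorphism to ℤ. Let G be a group whose abelianization G/[G,G] is finite. Then every group homomorphism φ : G → P is trivial. -/

import Mathlib

theorem stmt_4 {P G : Type*} [Group P] [Group G]
    (hP : ∀ H : Subgroup P, H ≠ ⊥ → ∃ f : H →* Multiplicative ℤ, f ≠ 1)
    (hG : Finite (Abelianization G))
    (φ : G →* P) : ∀ g : G, φ g = 1 := by
  by_contra h
  push_neg at h
  have hne : φ.range ≠ ⊥ := by
    intro hbot
    obtain ⟨g, hg⟩ := h
    exact hg ((Subgroup.eq_bot_iff_forall _).mp hbot (φ g) ⟨g, rfl⟩)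
  obtain ⟨f, hf⟩ := hP φ.range hne
  apply hf
  -- ψ : G →* Multiplicative ℤ
  set ψ : G →* Multiplicative ℤ := f.comp φ.rangeRestrict with hψ
  have hψ1 : ψ = 1 := by
    ext g
    have : ψ g = (Abelianization.lift ψ) (Abelianization.of g) := by
      simp [Abelianization.lift_apply_of]
    have hfin : IsOfFinOrder (Abelianization.of g) := isOfFinOrder_of_finite _
    obtain ⟨n, hn, hgn⟩ := hfin.exists_pow_eq_one
    have : (ψ g) ^ n = 1 := by
      rw [this, ← map_pow, hgn, map_one]
    have h2 : (n : ℤ) • (Multiplicative.toAdd (ψ g)) = 0 := by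
      have := congrArg Multiplicative.toAdd this
      simpa [toAdd_pow] using this
    have h3 : Multiplicative.toAdd (ψ g) = 0 := by
      rcases smul_eq_zero.mp h2 with h | h
      · exact absurd (by exact_mod_cast h) hn.ne'
      · exact h
    simpa using h3
  apply MonoidHom.ext
  rintro ⟨x, g, rfl⟩
  have : ψ g = 1 := by rw [hψ1]; rfl
  exact this
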